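/- Fix s ≥ 1 and a ≥ 1. There exist a constant C (depending on s and a) and a function c : ℕ → ℝ≥0 with c(N) → 0 as N → ∞ (depending on s and a) such that the following holds. Let b be a nonzero integer with |b| ≤ a, let f : {-N,…,N} → ℂ be bounded in magnitude by 1 (zero outside {-N,…,N}), and define f̃ : {1,…,2aN} → ℂ by f̃(x) = f((x - aN)/b) when x ∈ b·{-N,…,N} + aN, and f̃(x) = 0 for all other x ∈ {1,…,2aN}. Then ‖f̃‖_{U^{s+1}[2aN]} ≤ C · ‖f‖_{U^{s+1}[-N,N]} + c(N). -/

import Mathlib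

open Finset Pointwise Filter

lemma prod_finset_fin_succ {d : ℕ} {M : Type*} [CommMonoid M] (G : Finset (Fin (d+1)) → M) :
    ∏ ω : Finset (Fin (d+1)), G ω
      = ∏ σ : Finset (Fin d), (G (σ.map (Fin.succEmb d)) * G (insert 0 (σ.map (Fin.succEmb d)))) := by
  classical
  set i : Finset (Fin d) × Bool → Finset (Fin (d+1)) := fun p =>
    if p.2 then insert 0 (p.1.map (Fin.succEmb d)) else p.1.map (Fin.succEmb d) with hi
  set j : Finset (Fin (d+1)) → Finset (Fin d) × Bool := fun ω =>
    (ω.preimage Fin.succ ((Fin.succ_injective d).injOn), decide ((0 : Fin (d+1)) ∈ ω)) with hj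
  have hrec : ∀ ω : Finset (Fin (d+1)), i (j ω) = ω := by
    intro ω
    by_cases h0 : (0 : Fin (d+1)) ∈ ω <;>
    · simp only [hi, hj, h0, decide_true, decide_false, if_true, if_false]
      ext x
      induction x using Fin.cases <;>
        simp [Finset.mem_preimage, Finset.mem_map, Fin.succEmb, h0,
          (Fin.succ_injective d).eq_iff, Fin.succ_ne_zero, (Fin.succ_ne_zero _).symm]
  have h : ∏ ω : Finset (Fin (d+1)), G ω = ∏ p : Finset (Fin d) × Bool, G (i p) := by
    refine Finset.prod_nbij' j i (fun a _ => mem_univ _) (fun a _ => mem_univ _)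
      (fun ω _ => hrec ω) ?_ (fun ω _ => (congrArg G (hrec ω)).symm)
    rintro ⟨σ, b⟩ _
    cases b <;>
    · simp only [hi, hj, if_true, if_false, Prod.mk.injEq, Bool.decide_iff]
      refine ⟨?_, ?_⟩
      · ext x
        simp [Finset.mem_preimage, Finset.mem_map, Fin.succEmb,
          (Fin.succ_injective d).eq_iff, Fin.succ_ne_zero]
      · simp [Fin.succ_ne_zero, eq_comm]
  rw [h, Fintype.prod_prod_type]
  refine Finset.prod_congr rfl fun σ _ => ?_
  simp [hi, Fintype.prod_bool, mul_comm]

lemma sum_piFinset_cons {d : ℕ} {M : Type*} [AddCommMonoid M] (s : Finset ℤ)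
    (F : (Fin (d+1) → ℤ) → M) :
    ∑ h ∈ Fintype.piFinset (fun _ : Fin (d+1) => s), F h
      = ∑ y ∈ s, ∑ h ∈ Fintype.piFinset (fun _ : Fin d => s), F (Fin.cons y h) := by
  classical
  have e : (∑ p ∈ s ×ˢ (Fintype.piFinset fun _ : Fin d => s), F (Fin.cons p.1 p.2))
      = ∑ y ∈ s, ∑ h ∈ Fintype.piFinset (fun _ : Fin d => s), F (Fin.cons y h) :=
    Finset.sum_product _ _ _
  rw [← e]
  refine Finset.sum_nbij' (fun h => ((h 0 : ℤ), Fin.tail h)) (fun p => Fin.cons p.1 p.2)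
    ?_ ?_ ?_ ?_ ?_
  · intro h hh
    simp only [Fintype.mem_piFinset] at hh
    simp only [Finset.mem_product, Fintype.mem_piFinset]
    exact ⟨hh 0, fun i => hh i.succ⟩
  · rintro ⟨y, h⟩ hp
    simp only [Finset.mem_product, Fintype.mem_piFinset] at hp
    simp only [Fintype.mem_piFinset]
    intro i
    induction i using Fin.cases <;> simp [hp.1, hp.2 _]
  · intro h _; exact Fin.cons_self_tail h
  · rintro ⟨y, h⟩ _; simp [Fin.tail_cons]
  · intro h _; simp [Fin.cons_self_tail]


lemma box_re_nonneg (d : ℕ) (A : Finset ℤ) (g : ℤ → ℂ) (hg : ∀ x ∉ A, g x = 0) :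
    0 ≤ (∑ p ∈ (A ×ˢ Fintype.piFinset fun _ : Fin (d+1) => A - A).filter
        (fun p => ∀ ω : Finset (Fin (d+1)), p.1 + ∑ i ∈ ω, p.2 i ∈ A),
      ∏ ω : Finset (Fin (d+1)),
        if ω.card % 2 = 0 then g (p.1 + ∑ i ∈ ω, p.2 i)
        else (starRingEnd ℂ) (g (p.1 + ∑ i ∈ ω, p.2 i))).re := by
  classical
  set R : ℤ → (Fin d → ℤ) → ℂ := fun x h =>
    ∏ σ : Finset (Fin d),
      if σ.card % 2 = 0 then g (x + ∑ i ∈ σ, h i)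
      else (starRingEnd ℂ) (g (x + ∑ i ∈ σ, h i)) with hR
  set F : (Fin d → ℤ) → ℂ := fun h => ∑ x ∈ A, R x h with hF
  have hRzero : ∀ x h, x ∉ A → R x h = 0 := by
    intro x h hx
    rw [hR]
    refine Finset.prod_eq_zero (Finset.mem_univ (∅ : Finset (Fin d))) ?_
    simp [hg x hx]
  -- step 1 : remove the filter
  have h1 : (∑ p ∈ (A ×ˢ Fintype.piFinset fun _ : Fin (d+1) => A - A).filter
        (fun p => ∀ ω : Finset (Fin (d+1)), p.1 + ∑ i ∈ ω, p.2 i ∈ A),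
      ∏ ω : Finset (Fin (d+1)),
        if ω.card % 2 = 0 then g (p.1 + ∑ i ∈ ω, p.2 i)
        else (starRingEnd ℂ) (g (p.1 + ∑ i ∈ ω, p.2 i)))
      = ∑ p ∈ A ×ˢ Fintype.piFinset fun _ : Fin (d+1) => A - A,
      ∏ ω : Finset (Fin (d+1)),
        if ω.card % 2 = 0 then g (p.1 + ∑ i ∈ ω, p.2 i)
        else (starRingEnd ℂ) (g (p.1 + ∑ i ∈ ω, p.2 i)) := by
    refine Finset.sum_subset (Finset.filter_subset _ _) ?_
    intro p hp hnp
    simp only [Finset.mem_filter, hp, true_and, not_forall] at hnp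
    obtain ⟨ω, hω⟩ := hnp
    refine Finset.prod_eq_zero (Finset.mem_univ ω) ?_
    rcases Nat.even_or_odd ω.card with he | ho
    · rw [if_pos (Nat.even_iff.mp he), hg _ hω]
    · rw [if_neg (by rw [Nat.odd_iff.mp ho]; omega), hg _ hω, map_zero]
  rw [h1, Finset.sum_product]
  -- step 2 : split the first difference coordinate
  have h2 : ∀ x : ℤ,
      (∑ h ∈ Fintype.piFinset fun _ : Fin (d+1) => A - A,
        ∏ ω : Finset (Fin (d+1)),
          if ω.card % 2 = 0 then g (x + ∑ i ∈ ω, h i)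
          else (starRingEnd ℂ) (g (x + ∑ i ∈ ω, h i)))
      = ∑ y ∈ A - A, ∑ h ∈ Fintype.piFinset fun _ : Fin d => A - A,
          R x h * (starRingEnd ℂ) (R (x + y) h) := by
    intro x
    rw [sum_piFinset_cons (A - A) (fun h =>
      ∏ ω : Finset (Fin (d+1)),
        if ω.card % 2 = 0 then g (x + ∑ i ∈ ω, h i)
        else (starRingEnd ℂ) (g (x + ∑ i ∈ ω, h i)))]
    refine Finset.sum_congr rfl fun y _ => Finset.sum_congr rfl fun h _ => ?_
    rw [prod_finset_fin_succ (fun ω =>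
      if ω.card % 2 = 0 then g (x + ∑ i ∈ ω, (Fin.cons y h : Fin (d+1) → ℤ) i)
      else (starRingEnd ℂ) (g (x + ∑ i ∈ ω, (Fin.cons y h : Fin (d+1) → ℤ) i))),
      Finset.prod_mul_distrib]
    congr 1
    · refine Finset.prod_congr rfl fun σ _ => ?_
      rw [Finset.card_map, Finset.sum_map]
      simp [Fin.succEmb, Fin.cons_succ]
    · show _ = (starRingEnd ℂ) (∏ σ : Finset (Fin d),
          if σ.card % 2 = 0 then g (x + y + ∑ i ∈ σ, h i)
          else (starRingEnd ℂ) (g (x + y + ∑ i ∈ σ, h i)))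
      rw [map_prod]
      refine Finset.prod_congr rfl fun σ _ => ?_
      have h0 : (0 : Fin (d+1)) ∉ σ.map (Fin.succEmb d) := by
        simp only [Finset.mem_map, not_exists]
        rintro i ⟨_, hi⟩
        exact Fin.succ_ne_zero i (by simpa [Fin.succEmb] using hi)
      rw [Finset.card_insert_of_notMem h0, Finset.sum_insert h0, Finset.sum_map,
        Finset.card_map]
      have hsum : (Fin.cons y h : Fin (d+1) → ℤ) 0
          + ∑ i ∈ σ, (Fin.cons y h : Fin (d+1) → ℤ) ((Fin.succEmb d) i) = y + ∑ i ∈ σ, h i := by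
        simp [Fin.succEmb, Fin.cons_succ]
      rw [hsum]
      have harg : x + (y + ∑ i ∈ σ, h i) = x + y + ∑ i ∈ σ, h i := by ring
      rw [harg]
      rcases Nat.even_or_odd σ.card with he | ho
      · have h1' := Nat.even_iff.mp he
        rw [if_neg (show ¬((σ.card + 1) % 2 = 0) by omega), if_pos h1']
      · have h1' := Nat.odd_iff.mp ho
        rw [if_pos (show (σ.card + 1) % 2 = 0 by omega),
          if_neg (show ¬(σ.card % 2 = 0) by omega)]
        simp
  have h6 : ∀ x ∈ A, ∀ hh : Fin d → ℤ,
      (∑ y ∈ A - A, R (x + y) hh) = F hh := by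
    intro x hx hh
    have e1 : (∑ y ∈ A - A, R (x + y) hh)
        = ∑ z ∈ (A - A).map (addLeftEmbedding x), R z hh := by
      rw [Finset.sum_map]
      refine Finset.sum_congr rfl fun y _ => ?_
      rw [addLeftEmbedding_apply]
    have hAM : A ⊆ (A - A).map (addLeftEmbedding x) := by
      intro z hz
      simp only [Finset.mem_map, addLeftEmbedding_apply]
      exact ⟨z - x, Finset.sub_mem_sub hz hx, by ring⟩
    rw [e1, hF]
    exact (Finset.sum_subset hAM fun z _ hz => hRzero z hh hz).symm
  have h3 : (∑ x ∈ A, ∑ h ∈ Fintype.piFinset fun _ : Fin (d+1) => A - A,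
      ∏ ω : Finset (Fin (d+1)),
        if ω.card % 2 = 0 then g (x + ∑ i ∈ ω, h i)
        else (starRingEnd ℂ) (g (x + ∑ i ∈ ω, h i)))
      = ∑ h ∈ Fintype.piFinset fun _ : Fin d => A - A, F h * (starRingEnd ℂ) (F h) := by
    rw [Finset.sum_congr rfl fun x _ => h2 x]
    have e : ∀ x ∈ A,
        (∑ y ∈ A - A, ∑ h ∈ Fintype.piFinset fun _ : Fin d => A - A,
          R x h * (starRingEnd ℂ) (R (x + y) h))
        = ∑ h ∈ Fintype.piFinset fun _ : Fin d => A - A, R x h * (starRingEnd ℂ) (F h) := by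
      intro x hx
      rw [Finset.sum_comm]
      refine Finset.sum_congr rfl fun h _ => ?_
      rw [← Finset.mul_sum, ← map_sum, h6 x hx h]
    rw [Finset.sum_congr rfl e, Finset.sum_comm]
    refine Finset.sum_congr rfl fun h _ => ?_
    rw [← Finset.sum_mul, hF]
  rw [h3, Complex.re_sum]
  refine Finset.sum_nonneg fun h _ => ?_
  rw [Complex.mul_conj]
  rw [Complex.ofReal_re]
  exact Complex.normSq_nonneg _


lemma real_rpow_add_le {x y p : ℝ} (hx : 0 ≤ x) (hy : 0 ≤ y) (hp0 : 0 ≤ p) (hp1 : p ≤ 1) :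
    (x + y) ^ p ≤ x ^ p + y ^ p := by
  have hxy : ((x + y).toNNReal) = x.toNNReal + y.toNNReal := Real.toNNReal_add hx hy
  calc (x + y) ^ p = (((x + y).toNNReal ^ p : NNReal) : ℝ) := by
        rw [NNReal.coe_rpow, Real.coe_toNNReal _ (by linarith)]
    _ ≤ ((x.toNNReal ^ p + y.toNNReal ^ p : NNReal) : ℝ) := by
        have h := NNReal.rpow_add_le_add_rpow x.toNNReal y.toNNReal hp0 hp1
        rw [← hxy] at h
        exact_mod_cast h
    _ = x ^ p + y ^ p := by
        rw [NNReal.coe_add, NNReal.coe_rpow, NNReal.coe_rpow,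
          Real.coe_toNNReal _ hx, Real.coe_toNNReal _ hy]


lemma step_main (s a N : ℕ) (ha : 1 ≤ a) (hN : 1 ≤ N) (b : ℤ) (hb : b ≠ 0)
    (hba : |b| ≤ (a:ℤ)) (f : ℤ → ℂ) (hf1 : ∀ x, ‖f x‖ ≤ 1) :
    (∑ p ∈ ((Finset.Icc (1 : ℤ) (2 * (a : ℤ) * (N : ℤ))) ×ˢ Fintype.piFinset fun _ : Fin (s+1) =>
          (Finset.Icc (1 : ℤ) (2 * (a : ℤ) * (N : ℤ))) - (Finset.Icc (1 : ℤ) (2 * (a : ℤ) * (N : ℤ)))).filter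
        (fun p => ∀ ω : Finset (Fin (s+1)), p.1 + ∑ i ∈ ω, p.2 i ∈ (Finset.Icc (1 : ℤ) (2 * (a : ℤ) * (N : ℤ)))),
      ∏ ω : Finset (Fin (s+1)),
        if ω.card % 2 = 0 then
          (fun x : ℤ =>
            if 1 ≤ x ∧ x ≤ 2 * (a : ℤ) * N ∧ b ∣ (x - (a : ℤ) * N) ∧
                (x - (a : ℤ) * N) / b ∈ Finset.Icc (-(N : ℤ)) (N : ℤ)
            then f ((x - (a : ℤ) * N) / b) else 0) (p.1 + ∑ i ∈ ω, p.2 i)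
        else (starRingEnd ℂ) ((fun x : ℤ =>
            if 1 ≤ x ∧ x ≤ 2 * (a : ℤ) * N ∧ b ∣ (x - (a : ℤ) * N) ∧
                (x - (a : ℤ) * N) / b ∈ Finset.Icc (-(N : ℤ)) (N : ℤ)
            then f ((x - (a : ℤ) * N) / b) else 0) (p.1 + ∑ i ∈ ω, p.2 i))).re ≤
    (∑ p ∈ ((Finset.Icc (-(N : ℤ)) (N : ℤ)) ×ˢ Fintype.piFinset fun _ : Fin (s+1) =>
          (Finset.Icc (-(N : ℤ)) (N : ℤ)) - (Finset.Icc (-(N : ℤ)) (N : ℤ))).filter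
        (fun p => ∀ ω : Finset (Fin (s+1)), p.1 + ∑ i ∈ ω, p.2 i ∈ (Finset.Icc (-(N : ℤ)) (N : ℤ))),
      ∏ ω : Finset (Fin (s+1)),
        if ω.card % 2 = 0 then f (p.1 + ∑ i ∈ ω, p.2 i)
        else (starRingEnd ℂ) (f (p.1 + ∑ i ∈ ω, p.2 i))).re
      + 2^(s+2) * (5*(N:ℝ))^(s+1) := by
  have hN1 : (1:ℤ) ≤ (N:ℤ) := by exact_mod_cast hN
  have ha1 : (1:ℤ) ≤ (a:ℤ) := by exact_mod_cast ha
  set ft := fun x : ℤ =>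
      if 1 ≤ x ∧ x ≤ 2 * (a : ℤ) * N ∧ b ∣ (x - (a : ℤ) * N) ∧
          (x - (a : ℤ) * N) / b ∈ Finset.Icc (-(N : ℤ)) (N : ℤ)
      then f ((x - (a : ℤ) * N) / b) else 0 with hft
  set A := Finset.Icc (-(N : ℤ)) (N : ℤ) with hA
  set A' := Finset.Icc (1 : ℤ) (2 * (a : ℤ) * (N : ℤ)) with hA'
  set T := (A' ×ˢ Fintype.piFinset fun _ : Fin (s+1) => A' - A').filter
      (fun p => ∀ ω : Finset (Fin (s+1)), p.1 + ∑ i ∈ ω, p.2 i ∈ A') with hT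
  set Tf := (A ×ˢ Fintype.piFinset fun _ : Fin (s+1) => A - A).filter
      (fun p => ∀ ω : Finset (Fin (s+1)), p.1 + ∑ i ∈ ω, p.2 i ∈ A) with hTf
  set φ : ℤ × (Fin (s+1) → ℤ) → ℤ × (Fin (s+1) → ℤ) :=
      fun p => (b * p.1 + (a:ℤ) * N, fun i => b * p.2 i) with hphi
  set G := Tf.filter (fun p => φ p ∈ T) with hG
  have hGsub : G ⊆ Tf := Finset.filter_subset _ _
  -- the rescaled sum equals the sum over G of the original cube terms
  have key1 : (∑ p ∈ T, ∏ ω : Finset (Fin (s+1)),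
        if ω.card % 2 = 0 then ft (p.1 + ∑ i ∈ ω, p.2 i)
        else (starRingEnd ℂ) (ft (p.1 + ∑ i ∈ ω, p.2 i)))
      = ∑ p ∈ G, ∏ ω : Finset (Fin (s+1)),
        if ω.card % 2 = 0 then f (p.1 + ∑ i ∈ ω, p.2 i)
        else (starRingEnd ℂ) (f (p.1 + ∑ i ∈ ω, p.2 i)) := by
    classical
    have e1 : (∑ p ∈ T, ∏ ω : Finset (Fin (s+1)),
          if ω.card % 2 = 0 then ft (p.1 + ∑ i ∈ ω, p.2 i)
          else (starRingEnd ℂ) (ft (p.1 + ∑ i ∈ ω, p.2 i)))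
        = ∑ p ∈ T.filter (fun p => ∀ ω : Finset (Fin (s+1)),
            1 ≤ p.1 + ∑ i ∈ ω, p.2 i ∧ p.1 + ∑ i ∈ ω, p.2 i ≤ 2 * (a : ℤ) * N ∧
            b ∣ (p.1 + ∑ i ∈ ω, p.2 i - (a : ℤ) * N) ∧
            (p.1 + ∑ i ∈ ω, p.2 i - (a : ℤ) * N) / b ∈ A),
          ∏ ω : Finset (Fin (s+1)),
            if ω.card % 2 = 0 then ft (p.1 + ∑ i ∈ ω, p.2 i)
            else (starRingEnd ℂ) (ft (p.1 + ∑ i ∈ ω, p.2 i)) := by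
      symm
      apply Finset.sum_subset (Finset.filter_subset _ _)
      intro p hp hnp
      simp only [Finset.mem_filter, hp, true_and, not_forall] at hnp
      obtain ⟨ω, hω⟩ := hnp
      apply Finset.prod_eq_zero (Finset.mem_univ ω)
      have hz : ft (p.1 + ∑ i ∈ ω, p.2 i) = 0 := by
        rw [hft]
        exact if_neg hω
      simp [hz]
    rw [e1]
    have hkey : ∀ p : ℤ × (Fin (s+1) → ℤ), (∀ ω : Finset (Fin (s+1)),
          1 ≤ p.1 + ∑ i ∈ ω, p.2 i ∧ p.1 + ∑ i ∈ ω, p.2 i ≤ 2*(a:ℤ)*N ∧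
          b ∣ (p.1 + ∑ i ∈ ω, p.2 i - (a:ℤ)*N) ∧
          (p.1 + ∑ i ∈ ω, p.2 i - (a:ℤ)*N)/b ∈ A) →
        (b ∣ p.1 - (a:ℤ)*N) ∧ (∀ i, b ∣ p.2 i) ∧
        (∀ ω : Finset (Fin (s+1)), (p.1 - (a:ℤ)*N)/b + ∑ i ∈ ω, p.2 i / b
            = (p.1 + ∑ i ∈ ω, p.2 i - (a:ℤ)*N)/b) := by
      intro p hP
      have h0 : b ∣ p.1 - (a:ℤ)*N := by
        have := (hP ∅).2.2.1
        simpa using this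
      have hdi : ∀ i, b ∣ p.2 i := by
        intro i
        have h1 := (hP {i}).2.2.1
        rw [Finset.sum_singleton] at h1
        have h2 := dvd_sub h1 h0
        rwa [show p.1 + p.2 i - (a:ℤ)*N - (p.1 - (a:ℤ)*N) = p.2 i by ring] at h2
      refine ⟨h0, hdi, fun ω => ?_⟩
      have hb2 : b * ((p.1 - (a:ℤ)*N)/b + ∑ i ∈ ω, p.2 i / b)
          = p.1 + ∑ i ∈ ω, p.2 i - (a:ℤ)*N := by
        rw [mul_add, Int.mul_ediv_cancel' h0, Finset.mul_sum,
          Finset.sum_congr rfl fun i _ => Int.mul_ediv_cancel' (hdi i)]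
        ring
      rw [← hb2, Int.mul_ediv_cancel_left _ hb]
    have hid : ∀ p : ℤ × (Fin (s+1) → ℤ), (b ∣ p.1 - (a:ℤ)*N) → (∀ i, b ∣ p.2 i) →
        φ ((p.1 - (a:ℤ)*N)/b, fun i => p.2 i / b) = p := by
      intro p h0 hdi
      rw [hphi]
      refine Prod.ext ?_ (funext fun i => ?_)
      · show b * ((p.1 - (a:ℤ)*N)/b) + (a:ℤ)*N = p.1
        rw [Int.mul_ediv_cancel' h0]
        ring
      · exact Int.mul_ediv_cancel' (hdi i)
    apply Finset.sum_nbij' (i := fun p : ℤ × (Fin (s+1) → ℤ) =>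
        (((p.1 - (a:ℤ)*N)/b : ℤ), fun i : Fin (s+1) => p.2 i / b)) (j := φ)
    · -- maps into G
      intro p hp
      obtain ⟨hpT, hP⟩ := Finset.mem_filter.mp hp
      obtain ⟨h0, hdi, hcor⟩ := hkey p hP
      have hmA : ∀ ω : Finset (Fin (s+1)),
          (p.1 - (a:ℤ)*N)/b + ∑ i ∈ ω, p.2 i / b ∈ A := by
        intro ω
        rw [hcor ω]
        exact (hP ω).2.2.2
      have hx0 : (p.1 - (a:ℤ)*N)/b ∈ A := by
        have := hmA ∅
        simpa using this
      rw [hG, Finset.mem_filter]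
      constructor
      · rw [hTf, Finset.mem_filter]
        refine ⟨Finset.mem_product.mpr ⟨hx0, ?_⟩, hmA⟩
        rw [Fintype.mem_piFinset]
        intro i
        have hci : (p.1 - (a:ℤ)*N)/b + p.2 i / b ∈ A := by
          have := hmA {i}
          rwa [Finset.sum_singleton] at this
        show p.2 i / b ∈ A - A
        have he : p.2 i / b = ((p.1 - (a:ℤ)*N)/b + p.2 i / b) - (p.1 - (a:ℤ)*N)/b := by ring
        rw [he]
        exact Finset.sub_mem_sub hci hx0
      · rw [hid p h0 hdi]
        exact hpT
    · -- φ maps G into T.filter P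
      intro p hp
      obtain ⟨hpTf, hpT⟩ := Finset.mem_filter.mp hp
      refine Finset.mem_filter.mpr ⟨hpT, ?_⟩
      intro ω
      have hc : (φ p).1 + ∑ i ∈ ω, (φ p).2 i
          = b * (p.1 + ∑ i ∈ ω, p.2 i) + (a:ℤ)*N := by
        rw [hphi]
        show b * p.1 + (a:ℤ)*N + ∑ i ∈ ω, b * p.2 i
            = b * (p.1 + ∑ i ∈ ω, p.2 i) + (a:ℤ)*N
        rw [mul_add, Finset.mul_sum]
        ring
      rw [hc]
      have hmem : b * (p.1 + ∑ i ∈ ω, p.2 i) + (a:ℤ)*N ∈ A' := by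
        have := (Finset.mem_filter.mp hpT).2 ω
        rwa [hc] at this
      rw [hA', Finset.mem_Icc] at hmem
      refine ⟨hmem.1, hmem.2, ⟨p.1 + ∑ i ∈ ω, p.2 i, by ring⟩, ?_⟩
      rw [show b * (p.1 + ∑ i ∈ ω, p.2 i) + (a:ℤ)*N - (a:ℤ)*N
          = b * (p.1 + ∑ i ∈ ω, p.2 i) by ring, Int.mul_ediv_cancel_left _ hb]
      exact (Finset.mem_filter.mp hpTf).2 ω
    · -- φ (ψ p) = p on T.filter P
      intro p hp
      obtain ⟨hpT, hP⟩ := Finset.mem_filter.mp hp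
      obtain ⟨h0, hdi, hcor⟩ := hkey p hP
      exact hid p h0 hdi
    · -- ψ (φ p) = p on G
      intro p hp
      have h1 : (b * p.1 + (a:ℤ)*N - (a:ℤ)*N) / b = p.1 := by
        rw [show b * p.1 + (a:ℤ)*N - (a:ℤ)*N = b * p.1 by ring, Int.mul_ediv_cancel_left _ hb]
      have h2 : ∀ i : Fin (s+1), (b * p.2 i) / b = p.2 i :=
        fun i => Int.mul_ediv_cancel_left _ hb
      rw [hphi]
      exact Prod.ext h1 (funext h2)
    · -- terms agree
      intro p hp
      obtain ⟨hpT, hP⟩ := Finset.mem_filter.mp hp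
      obtain ⟨h0, hdi, hcor⟩ := hkey p hP
      refine Finset.prod_congr rfl fun ω _ => ?_
      have hftval : ft (p.1 + ∑ i ∈ ω, p.2 i)
          = f ((p.1 - (a:ℤ)*N)/b + ∑ i ∈ ω, p.2 i / b) := by
        rw [hft]
        show (if _ then f ((p.1 + ∑ i ∈ ω, p.2 i - (a:ℤ)*N)/b) else 0) = _
        rw [if_pos (hP ω), hcor ω]
      show (if ω.card % 2 = 0 then ft (p.1 + ∑ i ∈ ω, p.2 i)
          else (starRingEnd ℂ) (ft (p.1 + ∑ i ∈ ω, p.2 i)))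
        = (if ω.card % 2 = 0 then f ((p.1 - (a:ℤ)*N)/b + ∑ i ∈ ω, p.2 i / b)
          else (starRingEnd ℂ) (f ((p.1 - (a:ℤ)*N)/b + ∑ i ∈ ω, p.2 i / b)))
      rw [hftval]
  -- each cube term has real part at least -1
  have hterm : ∀ p : ℤ × (Fin (s+1) → ℤ),
      (-1:ℝ) ≤ (∏ ω : Finset (Fin (s+1)),
        if ω.card % 2 = 0 then f (p.1 + ∑ i ∈ ω, p.2 i)
        else (starRingEnd ℂ) (f (p.1 + ∑ i ∈ ω, p.2 i))).re := by
    intro p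
    have hz : ‖∏ ω : Finset (Fin (s+1)),
        if ω.card % 2 = 0 then f (p.1 + ∑ i ∈ ω, p.2 i)
        else (starRingEnd ℂ) (f (p.1 + ∑ i ∈ ω, p.2 i))‖ ≤ 1 := by
      refine le_trans (norm_prod_le _ _) ?_
      refine Finset.prod_le_one (fun _ _ => norm_nonneg _) (fun ω _ => ?_)
      split_ifs
      · exact hf1 _
      · simpa using hf1 _
    have h2 := abs_le.mp (le_trans (Complex.abs_re_le_norm _) hz)
    exact h2.1
  have hre1 : (∑ p ∈ T, ∏ ω : Finset (Fin (s+1)),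
        if ω.card % 2 = 0 then ft (p.1 + ∑ i ∈ ω, p.2 i)
        else (starRingEnd ℂ) (ft (p.1 + ∑ i ∈ ω, p.2 i))).re
      = ∑ p ∈ G, (∏ ω : Finset (Fin (s+1)),
        if ω.card % 2 = 0 then f (p.1 + ∑ i ∈ ω, p.2 i)
        else (starRingEnd ℂ) (f (p.1 + ∑ i ∈ ω, p.2 i))).re := by
    rw [key1, Complex.re_sum]
  have hre2 : (∑ p ∈ Tf, ∏ ω : Finset (Fin (s+1)),
        if ω.card % 2 = 0 then f (p.1 + ∑ i ∈ ω, p.2 i)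
        else (starRingEnd ℂ) (f (p.1 + ∑ i ∈ ω, p.2 i))).re
      = ∑ p ∈ Tf, (∏ ω : Finset (Fin (s+1)),
        if ω.card % 2 = 0 then f (p.1 + ∑ i ∈ ω, p.2 i)
        else (starRingEnd ℂ) (f (p.1 + ∑ i ∈ ω, p.2 i))).re := Complex.re_sum _ _
  have hsplit := Finset.sum_sdiff (f := fun p : ℤ × (Fin (s+1) → ℤ) =>
      (∏ ω : Finset (Fin (s+1)),
        if ω.card % 2 = 0 then f (p.1 + ∑ i ∈ ω, p.2 i)
        else (starRingEnd ℂ) (f (p.1 + ∑ i ∈ ω, p.2 i))).re) hGsub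
  have hlow : -(((Tf \ G).card : ℝ)) ≤ ∑ p ∈ Tf \ G, (∏ ω : Finset (Fin (s+1)),
        if ω.card % 2 = 0 then f (p.1 + ∑ i ∈ ω, p.2 i)
        else (starRingEnd ℂ) (f (p.1 + ∑ i ∈ ω, p.2 i))).re := by
    have h3 := Finset.sum_le_sum (f := fun _ => (-1:ℝ)) (s := Tf \ G) (fun p _ => hterm p)
    simpa using h3
  have hcard : ((Tf \ G).card : ℝ) ≤ 2^(s+2) * (5*(N:ℝ))^(s+1) := by
    classical
    have hTfG : Tf \ G = Tf.filter (fun p => ¬ φ p ∈ T) := by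
      rw [hG]
      exact (Finset.filter_not _ _).symm
    have hboundary : ∀ p ∈ Tf, φ p ∉ T → ∃ ω : Finset (Fin (s+1)),
        p.1 + ∑ i ∈ ω, p.2 i = (N:ℤ) ∨ p.1 + ∑ i ∈ ω, p.2 i = -(N:ℤ) := by
      intro p hpTf hpT
      by_contra hcon
      push_neg at hcon
      apply hpT
      have hint : ∀ ω : Finset (Fin (s+1)),
          -(N:ℤ)+1 ≤ p.1 + ∑ i ∈ ω, p.2 i ∧ p.1 + ∑ i ∈ ω, p.2 i ≤ (N:ℤ)-1 := by
        intro ω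
        have h1 := (Finset.mem_filter.mp hpTf).2 ω
        rw [hA, Finset.mem_Icc] at h1
        have h2 := hcon ω
        omega
      have himg : ∀ c : ℤ, -(N:ℤ)+1 ≤ c → c ≤ (N:ℤ)-1 → b*c + (a:ℤ)*N ∈ A' := by
        intro c hc1 hc2
        rw [hA', Finset.mem_Icc]
        have habs : |b*c| ≤ (a:ℤ)*((N:ℤ)-1) := by
          rw [abs_mul]
          apply mul_le_mul hba _ (abs_nonneg _) (le_trans zero_le_one ha1)
          rw [abs_le]
          omega
        rw [abs_le] at habs
        constructor <;> nlinarith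
      have hcors : ∀ ω : Finset (Fin (s+1)), (φ p).1 + ∑ i ∈ ω, (φ p).2 i ∈ A' := by
        intro ω
        have hc : (φ p).1 + ∑ i ∈ ω, (φ p).2 i
            = b * (p.1 + ∑ i ∈ ω, p.2 i) + (a:ℤ)*N := by
          rw [hphi]
          show b * p.1 + (a:ℤ)*N + ∑ i ∈ ω, b * p.2 i
              = b * (p.1 + ∑ i ∈ ω, p.2 i) + (a:ℤ)*N
          rw [mul_add, Finset.mul_sum]
          ring
        rw [hc]
        exact himg _ (hint ω).1 (hint ω).2
      rw [hT, Finset.mem_filter]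
      refine ⟨Finset.mem_product.mpr ⟨?_, ?_⟩, hcors⟩
      · have h4 := hcors ∅
        simpa using h4
      · rw [Fintype.mem_piFinset]
        intro i
        have h1 := hcors {i}
        rw [Finset.sum_singleton] at h1
        have h0 := hcors ∅
        rw [Finset.sum_empty, add_zero] at h0
        show b * p.2 i ∈ A' - A'
        have he : b * p.2 i = ((φ p).1 + (φ p).2 i) - (φ p).1 := by
          show b * p.2 i = ((φ p).1 + b * p.2 i) - (φ p).1
          ring
        rw [he]
        exact Finset.sub_mem_sub h1 h0
    have hsubB : Tf.filter (fun p => ¬ φ p ∈ T) ⊆ Finset.univ.biUnion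
        (fun ω : Finset (Fin (s+1)) => Tf.filter
          (fun p => p.1 + ∑ i ∈ ω, p.2 i = (N:ℤ) ∨ p.1 + ∑ i ∈ ω, p.2 i = -(N:ℤ))) := by
      intro p hp
      obtain ⟨hpTf, hnp⟩ := Finset.mem_filter.mp hp
      obtain ⟨ω, hω⟩ := hboundary p hpTf hnp
      exact Finset.mem_biUnion.mpr ⟨ω, Finset.mem_univ _, Finset.mem_filter.mpr ⟨hpTf, hω⟩⟩
    have hcount : ∀ ω : Finset (Fin (s+1)), (Tf.filter
        (fun p => p.1 + ∑ i ∈ ω, p.2 i = (N:ℤ) ∨ p.1 + ∑ i ∈ ω, p.2 i = -(N:ℤ))).card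
        ≤ 2 * (4*N+1)^(s+1) := by
      intro ω
      have hinj : (Tf.filter
          (fun p => p.1 + ∑ i ∈ ω, p.2 i = (N:ℤ) ∨ p.1 + ∑ i ∈ ω, p.2 i = -(N:ℤ))).card
          ≤ (({(N:ℤ), -(N:ℤ)} : Finset ℤ) ×ˢ (Fintype.piFinset fun _ : Fin (s+1) =>
            Finset.Icc (-(2*(N:ℤ))) (2*(N:ℤ)))).card := by
        apply Finset.card_le_card_of_injOn (fun p => (p.1 + ∑ i ∈ ω, p.2 i, p.2))
        · intro p hp
          obtain ⟨hpTf, hor⟩ := Finset.mem_filter.mp hp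
          refine Finset.mem_product.mpr ⟨?_, ?_⟩
          · rcases hor with h | h <;> simp [h]
          · have h5 := (Finset.mem_product.mp (Finset.mem_filter.mp hpTf).1).2
            rw [Fintype.mem_piFinset] at h5 ⊢
            intro i
            have hi := h5 i
            obtain ⟨u, hu, v, hv, huv⟩ := Finset.mem_sub.mp hi
            rw [hA, Finset.mem_Icc] at hu hv
            rw [Finset.mem_Icc, ← huv]
            omega
        · intro p hp q hq hpq
          simp only [Prod.mk.injEq] at hpq
          obtain ⟨h1, h2⟩ := hpq
          have h3 : p.1 = q.1 := by
            rw [h2] at h1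
            exact add_right_cancel h1
          exact Prod.ext h3 h2
      refine le_trans hinj ?_
      rw [Finset.card_product, Fintype.card_piFinset]
      have hc1 : ({(N:ℤ), -(N:ℤ)} : Finset ℤ).card ≤ 2 := Finset.card_insert_le _ _ |>.trans (by simp)
      have hc2 : (Finset.Icc (-(2*(N:ℤ))) (2*(N:ℤ))).card = 4*N+1 := by
        rw [Int.card_Icc]
        omega
      calc ({(N:ℤ), -(N:ℤ)} : Finset ℤ).card * ∏ _i : Fin (s+1), (Finset.Icc (-(2*(N:ℤ))) (2*(N:ℤ))).card
          = ({(N:ℤ), -(N:ℤ)} : Finset ℤ).card * (4*N+1)^(s+1) := by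
            rw [Finset.prod_const, hc2]
            simp
        _ ≤ 2 * (4*N+1)^(s+1) := Nat.mul_le_mul_right _ hc1
    have hnat : (Tf \ G).card ≤ 2^(s+1) * (2 * (4*N+1)^(s+1)) := by
      rw [hTfG]
      refine le_trans (Finset.card_le_card hsubB) (le_trans Finset.card_biUnion_le ?_)
      refine le_trans (Finset.sum_le_sum (fun ω _ => hcount ω)) ?_
      rw [Finset.sum_const, Finset.card_univ]
      have : Fintype.card (Finset (Fin (s+1))) = 2^(s+1) := by
        rw [Fintype.card_finset, Fintype.card_fin]
      rw [this, smul_eq_mul]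
    have hreal : ((Tf \ G).card : ℝ) ≤ 2^(s+2) * ((4*(N:ℝ)+1))^(s+1) := by
      calc ((Tf \ G).card : ℝ) ≤ ((2^(s+1) * (2 * (4*N+1)^(s+1)) : ℕ) : ℝ) := by
            exact_mod_cast hnat
        _ = 2^(s+2) * ((4*(N:ℝ)+1))^(s+1) := by
            push_cast
            ring
    refine le_trans hreal ?_
    have h41 : (4*(N:ℝ)+1) ≤ 5*(N:ℝ) := by
      have : (1:ℝ) ≤ (N:ℝ) := by exact_mod_cast hN
      linarith
    exact mul_le_mul_of_nonneg_left (pow_le_pow_left₀ (by positivity) h41 (s+1)) (by positivity)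
  rw [hre1]
  -- goal: sum over G ≤ (sum over Tf).re + bound
  rw [hre2]
  have := hsplit
  linarith
-- main theorem skeleton appended after prelude
noncomputable def gowersNorm (A : Finset ℤ) (d : ℕ) (f : ℤ → ℂ) : ℝ :=
  (((∑ p ∈ (A ×ˢ Fintype.piFinset fun _ : Fin d => A - A).filter
        (fun p => ∀ ω : Finset (Fin d), p.1 + ∑ i ∈ ω, p.2 i ∈ A),
      ∏ ω : Finset (Fin d),
        if ω.card % 2 = 0 then f (p.1 + ∑ i ∈ ω, p.2 i)
        else (starRingEnd ℂ) (f (p.1 + ∑ i ∈ ω, p.2 i))) /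
      (((A ×ˢ Fintype.piFinset fun _ : Fin d => A - A).filter
        (fun p => ∀ ω : Finset (Fin d), p.1 + ∑ i ∈ ω, p.2 i ∈ A)).card : ℂ)).re) ^
    ((1 : ℝ) / 2 ^ d)

set_option maxHeartbeats 2000000 in
open scoped Classical in
/-- Lemma 3.1 (`l:gowNorms`): the Gowers norm of the rescaled/recentred function
`f̃(x) = f((x - aN)/b)` on `{1,…,2aN}` is controlled by that of `f` on `{-N,…,N}`. -/
theorem rescaled_gowers_norm (s a : ℕ) (hs : 1 ≤ s) (ha : 1 ≤ a) :
    ∃ C : ℝ, ∃ c : ℕ → ℝ, (∀ N, 0 ≤ c N) ∧ Tendsto c atTop (nhds 0) ∧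
      ∀ N : ℕ, 1 ≤ N → ∀ b : ℤ, b ≠ 0 → |b| ≤ (a : ℤ) →
        ∀ f : ℤ → ℂ,
          (∀ x, ‖f x‖ ≤ 1) →
          (∀ x, x ∉ Finset.Icc (-(N : ℤ)) (N : ℤ) → f x = 0) →
          gowersNorm (Finset.Icc (1 : ℤ) (2 * (a : ℤ) * (N : ℤ))) (s + 1)
              (fun x : ℤ =>
                if 1 ≤ x ∧ x ≤ 2 * (a : ℤ) * N ∧ b ∣ (x - (a : ℤ) * N) ∧
                    (x - (a : ℤ) * N) / b ∈ Finset.Icc (-(N : ℤ)) (N : ℤ)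
                then f ((x - (a : ℤ) * N) / b) else 0) ≤
            C * gowersNorm (Finset.Icc (-(N : ℤ)) (N : ℤ)) (s + 1) f + c N := by
  set e : ℝ := (1 : ℝ) / 2 ^ (s+1) with he
  have he0 : 0 < e := by positivity
  have he1 : e ≤ 1 := by
    rw [he, div_le_one (by positivity)]
    exact one_le_pow₀ (by norm_num)
  set C1 : ℝ := 3 * 5 ^ (s+1) * ((s : ℝ) + 1) ^ (s+1) with hC1
  set C2 : ℝ := 2 ^ (s+2) * 5 ^ (s+1) * ((s : ℝ) + 1) ^ (s+1) with hC2
  have hC1pos : (1:ℝ) ≤ C1 := by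
    rw [hC1]
    have h5 : (1:ℝ) ≤ 5 ^ (s+1) := one_le_pow₀ (by norm_num)
    have h6 : (1:ℝ) ≤ ((s : ℝ) + 1) ^ (s+1) := one_le_pow₀ (by linarith [Nat.cast_nonneg (α := ℝ) s])
    nlinarith
  have hC2pos : (0:ℝ) < C2 := by positivity
  refine ⟨C1, fun N => (C2 / (N:ℝ)) ^ e, fun N => Real.rpow_nonneg (by positivity) _, ?_, ?_⟩
  · have h := (tendsto_const_div_atTop_nhds_zero_nat C2).rpow_const (p := e) (Or.inr he0.le)
    rwa [Real.zero_rpow he0.ne'] at h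
  intro N hN b hb hba f hf1 hf0
  have hN1 : (1:ℤ) ≤ (N:ℤ) := by exact_mod_cast hN
  have ha1 : (1:ℤ) ≤ (a:ℤ) := by exact_mod_cast ha
  have hNR : (0:ℝ) < (N:ℝ) := by exact_mod_cast hN
  set ft := fun x : ℤ =>
      if 1 ≤ x ∧ x ≤ 2 * (a : ℤ) * N ∧ b ∣ (x - (a : ℤ) * N) ∧
          (x - (a : ℤ) * N) / b ∈ Finset.Icc (-(N : ℤ)) (N : ℤ)
      then f ((x - (a : ℤ) * N) / b) else 0 with hft
  unfold gowersNorm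
  set A := Finset.Icc (-(N : ℤ)) (N : ℤ) with hA
  set A' := Finset.Icc (1 : ℤ) (2 * (a : ℤ) * (N : ℤ)) with hA'
  set T := (A' ×ˢ Fintype.piFinset fun _ : Fin (s+1) => A' - A').filter
      (fun p => ∀ ω : Finset (Fin (s+1)), p.1 + ∑ i ∈ ω, p.2 i ∈ A') with hT
  set Tf := (A ×ˢ Fintype.piFinset fun _ : Fin (s+1) => A - A).filter
      (fun p => ∀ ω : Finset (Fin (s+1)), p.1 + ∑ i ∈ ω, p.2 i ∈ A) with hTf
  set num' := ∑ p ∈ T, ∏ ω : Finset (Fin (s+1)),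
      if ω.card % 2 = 0 then ft (p.1 + ∑ i ∈ ω, p.2 i)
      else (starRingEnd ℂ) (ft (p.1 + ∑ i ∈ ω, p.2 i)) with hnum'
  set num := ∑ p ∈ Tf, ∏ ω : Finset (Fin (s+1)),
      if ω.card % 2 = 0 then f (p.1 + ∑ i ∈ ω, p.2 i)
      else (starRingEnd ℂ) (f (p.1 + ∑ i ∈ ω, p.2 i)) with hnum
  have hftsupp : ∀ x, x ∉ A' → ft x = 0 := by
    intro x hx
    rw [hft]
    refine if_neg ?_
    rintro ⟨h1', h2', -, -⟩
    exact hx (by rw [hA', Finset.mem_Icc]; exact ⟨h1', h2'⟩)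
  have h1 : 0 ≤ num'.re := by
    rw [hnum', hT]
    exact box_re_nonneg s A' ft hftsupp
  have h2 : 0 ≤ num.re := by
    rw [hnum, hTf]
    exact box_re_nonneg s A f hf0
  have h3 : (0:ℝ) < Tf.card := by
    have h0A : (0:ℤ) ∈ A := by rw [hA, Finset.mem_Icc]; omega
    have hmem : ((0:ℤ), (fun _ => (0:ℤ) : Fin (s+1) → ℤ)) ∈ Tf := by
      rw [hTf, Finset.mem_filter]
      refine ⟨Finset.mem_product.mpr ⟨h0A, ?_⟩, fun ω => ?_⟩
      · rw [Fintype.mem_piFinset]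
        intro i
        have := Finset.sub_mem_sub h0A h0A
        simpa using this
      · simpa using h0A
    exact_mod_cast Finset.card_pos.mpr ⟨_, hmem⟩
  have h4 : (N:ℝ) * ((N:ℝ)/((s:ℝ)+1)) ^ (s+1) ≤ T.card := by
    set K := (N:ℤ)/((s:ℤ)+1) with hK
    have hK0 : 0 ≤ K := Int.ediv_nonneg (by omega) (by omega)
    have hKs : ((s:ℤ)+1) * K ≤ N := by
      have h9 := Int.ediv_mul_le (N:ℤ) (show ((s:ℤ)+1) ≠ 0 by omega)
      rw [hK]
      linarith [h9]
    have hKN' : K ≤ (N:ℤ) := by nlinarith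
    have hsubP : (Finset.Icc (1:ℤ) (N:ℤ) ×ˢ Fintype.piFinset fun _ : Fin (s+1) =>
        Finset.Icc (0:ℤ) K) ⊆ T := by
      intro p hp
      obtain ⟨hp1, hp2⟩ := Finset.mem_product.mp hp
      rw [Finset.mem_Icc] at hp1
      rw [Fintype.mem_piFinset] at hp2
      have hpi : ∀ i, 0 ≤ p.2 i ∧ p.2 i ≤ K := fun i => Finset.mem_Icc.mp (hp2 i)
      have hcor : ∀ ω : Finset (Fin (s+1)),
          1 ≤ p.1 + ∑ i ∈ ω, p.2 i ∧ p.1 + ∑ i ∈ ω, p.2 i ≤ 2*(a:ℤ)*N := by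
        intro ω
        have hsum0 : 0 ≤ ∑ i ∈ ω, p.2 i := Finset.sum_nonneg fun i _ => (hpi i).1
        have hsumK : ∑ i ∈ ω, p.2 i ≤ ((s:ℤ)+1) * K := by
          calc ∑ i ∈ ω, p.2 i ≤ ∑ _i ∈ ω, K := Finset.sum_le_sum fun i _ => (hpi i).2
            _ = ω.card • K := by rw [Finset.sum_const]
            _ ≤ ((s:ℤ)+1) * K := by
                rw [nsmul_eq_mul]
                refine mul_le_mul_of_nonneg_right ?_ hK0
                have hων : ω.card ≤ s+1 := le_trans (Finset.card_le_univ ω) (by simp)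
                exact_mod_cast hων
        refine ⟨by linarith, ?_⟩
        nlinarith
      rw [hT, Finset.mem_filter]
      refine ⟨Finset.mem_product.mpr ⟨?_, ?_⟩, fun ω => ?_⟩
      · rw [hA', Finset.mem_Icc]
        refine ⟨hp1.1, ?_⟩
        nlinarith
      · rw [Fintype.mem_piFinset]
        intro i
        have h1' : p.2 i + 1 ∈ A' := by
          rw [hA', Finset.mem_Icc]
          refine ⟨by linarith [(hpi i).1], ?_⟩
          nlinarith [(hpi i).2]
        have hone : (1:ℤ) ∈ A' := by
          rw [hA', Finset.mem_Icc]
          refine ⟨le_refl _, by nlinarith⟩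
        have he : p.2 i = (p.2 i + 1) - 1 := by ring
        rw [he]
        exact Finset.sub_mem_sub h1' hone
      · rw [hA', Finset.mem_Icc]
        exact hcor ω
    have hcards : ((Finset.Icc (1:ℤ) (N:ℤ) ×ˢ Fintype.piFinset fun _ : Fin (s+1) =>
        Finset.Icc (0:ℤ) K).card : ℝ) = (N:ℝ) * ((K:ℝ)+1)^(s+1) := by
      rw [Finset.card_product, Fintype.card_piFinset]
      have c1 : (Finset.Icc (1:ℤ) (N:ℤ)).card = N := by rw [Int.card_Icc]; omega
      have c2 : (Finset.Icc (0:ℤ) K).card = K.toNat + 1 := by rw [Int.card_Icc]; omega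
      rw [c1, Finset.prod_const, c2, Finset.card_univ, Fintype.card_fin]
      push_cast
      have c3 : ((K.toNat : ℕ) : ℝ) = (K:ℝ) := by
        exact_mod_cast congrArg (Int.cast : ℤ → ℝ) (Int.toNat_of_nonneg hK0)
      rw [c3]
    have hKN : (N:ℝ)/((s:ℝ)+1) ≤ (K:ℝ)+1 := by
      have hlt := Int.lt_ediv_add_one_mul_self (N:ℤ) (show (0:ℤ) < (s:ℤ)+1 by omega)
      rw [div_le_iff₀ (by positivity)]
      rw [hK]
      exact_mod_cast le_of_lt hlt
    calc (N:ℝ) * ((N:ℝ)/((s:ℝ)+1)) ^ (s+1) ≤ (N:ℝ) * ((K:ℝ)+1)^(s+1) :=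
          mul_le_mul_of_nonneg_left (pow_le_pow_left₀ (by positivity) hKN _) (by positivity)
      _ = _ := hcards.symm
      _ ≤ T.card := by exact_mod_cast Finset.card_le_card hsubP
  have h5 : (Tf.card : ℝ) ≤ 3*(N:ℝ) * (5*(N:ℝ)) ^ (s+1) := by
    have hsub5 : Tf ⊆ A ×ˢ Fintype.piFinset fun _ : Fin (s+1) => A - A := by
      rw [hTf]; exact Finset.filter_subset _ _
    have hAc : A.card = 2*N+1 := by rw [hA, Int.card_Icc]; omega
    have hAAsub : A - A ⊆ Finset.Icc (-(2*(N:ℤ))) (2*(N:ℤ)) := by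
      intro z hz
      obtain ⟨u, hu, v, hv, huv⟩ := Finset.mem_sub.mp hz
      rw [hA, Finset.mem_Icc] at hu hv
      rw [Finset.mem_Icc, ← huv]
      omega
    have hAAc : (A - A).card ≤ 4*N+1 := by
      refine le_trans (Finset.card_le_card hAAsub) ?_
      rw [Int.card_Icc]
      omega
    have hnat : Tf.card ≤ (2*N+1) * (4*N+1)^(s+1) := by
      refine le_trans (Finset.card_le_card hsub5) ?_
      rw [Finset.card_product, Fintype.card_piFinset, Finset.prod_const, Finset.card_univ,
        Fintype.card_fin, hAc]
      exact Nat.mul_le_mul_left _ (Nat.pow_le_pow_left hAAc _)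
    have hNR1 : (1:ℝ) ≤ (N:ℝ) := by exact_mod_cast hN
    calc (Tf.card : ℝ) ≤ (((2*N+1) * (4*N+1)^(s+1) : ℕ) : ℝ) := by exact_mod_cast hnat
      _ = (2*(N:ℝ)+1) * (4*(N:ℝ)+1)^(s+1) := by push_cast; ring
      _ ≤ 3*(N:ℝ) * (5*(N:ℝ)) ^ (s+1) := by
          refine mul_le_mul (by linarith) (pow_le_pow_left₀ (by positivity) (by linarith) _)
            (by positivity) (by positivity)
  have h6 : num'.re ≤ num.re + 2^(s+2) * (5*(N:ℝ))^(s+1) := by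
    exact step_main s a N ha hN b hb hba f hf1
  have hT0 : (0:ℝ) < T.card := lt_of_lt_of_le (by positivity) h4
  have hre' : (num' / ((T.card : ℕ) : ℂ)).re = num'.re / (T.card : ℝ) := by
    rw [show ((T.card : ℕ) : ℂ) = ((T.card : ℝ) : ℂ) by norm_cast]
    exact Complex.div_ofReal_re _ _
  have hre : (num / ((Tf.card : ℕ) : ℂ)).re = num.re / (Tf.card : ℝ) := by
    rw [show ((Tf.card : ℕ) : ℂ) = ((Tf.card : ℝ) : ℂ) by norm_cast]
    exact Complex.div_ofReal_re _ _
  have hu0 : 0 ≤ num'.re / (T.card:ℝ) := div_nonneg h1 hT0.le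
  have hv0 : 0 ≤ num.re / (Tf.card:ℝ) := div_nonneg h2 h3.le
  have hP : (0:ℝ) < ((s:ℝ)+1)^(s+1) := by positivity
  have hkey : num'.re / (T.card:ℝ) ≤ C1 * (num.re / (Tf.card:ℝ)) + C2 / N := by
    have hTfC1 : (Tf.card : ℝ) ≤ C1 * T.card := by
      have hrw : C1 * ((N:ℝ) * ((N:ℝ)/((s:ℝ)+1)) ^ (s+1)) = 3*(N:ℝ)*(5*(N:ℝ))^(s+1) := by
        rw [hC1, div_pow]
        field_simp
        ring
      nlinarith [mul_le_mul_of_nonneg_left h4 (le_trans zero_le_one hC1pos)]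
    have p1 : num.re / (T.card:ℝ) ≤ C1 * (num.re / Tf.card) := by
      rw [mul_div_assoc', div_le_div_iff₀ hT0 h3]
      nlinarith [mul_le_mul_of_nonneg_left hTfC1 h2]
    have p2 : (2^(s+2) * (5*(N:ℝ))^(s+1)) / (T.card:ℝ) ≤ C2 / N := by
      rw [div_le_div_iff₀ hT0 hNR]
      have hrw : C2 * ((N:ℝ) * ((N:ℝ)/((s:ℝ)+1)) ^ (s+1)) = 2^(s+2)*(5*(N:ℝ))^(s+1) * N := by
        rw [hC2, div_pow]
        field_simp
        ring
      nlinarith [mul_le_mul_of_nonneg_left h4 hC2pos.le]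
    calc num'.re / (T.card:ℝ) ≤ (num.re + 2^(s+2) * (5*(N:ℝ))^(s+1)) / T.card :=
          (div_le_div_iff_of_pos_right hT0).mpr h6
      _ = num.re / (T.card:ℝ) + (2^(s+2) * (5*(N:ℝ))^(s+1)) / T.card := add_div _ _ _
      _ ≤ C1 * (num.re / Tf.card) + C2 / N := by linarith
  rw [hre', hre]
  calc (num'.re / (T.card:ℝ)) ^ e ≤ (C1 * (num.re / (Tf.card:ℝ)) + C2 / N) ^ e :=
        Real.rpow_le_rpow hu0 hkey he0.le
    _ ≤ (C1 * (num.re / (Tf.card:ℝ))) ^ e + (C2 / N) ^ e :=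
        real_rpow_add_le (mul_nonneg (le_trans zero_le_one hC1pos) hv0) (div_nonneg hC2pos.le hNR.le) he0.le he1
    _ ≤ C1 * (num.re / (Tf.card:ℝ)) ^ e + (C2 / N) ^ e := by
        rw [Real.mul_rpow (le_trans zero_le_one hC1pos) hv0]
        have h7 : C1 ^ e ≤ C1 := by
          calc C1 ^ e ≤ C1 ^ (1:ℝ) := Real.rpow_le_rpow_of_exponent_le hC1pos he1
            _ = C1 := Real.rpow_one _
        have h8 : 0 ≤ (num.re / (Tf.card:ℝ)) ^ e := Real.rpow_nonneg hv0 _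
        nlinarith
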